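/- Fix ω, B, g, Γ, σ², c > 0 and ξ ∈ (0,1], and let f(p) = ω·B·log₂(1 + p·g/(Γσ²)) / (p/ξ + c) for p ≥ 0. If 0 < p* < P_max and p* maximizes f on the interval [0, P_max], then p* satisfies the first-order characterization p* = ω·B·ξ/(f(p*)·ln 2) − Γσ²/g. (Equation (13) of the paper: the optimal power allocation of a link satisfies the energy-efficient water-filling formula.) -/

import Mathlib

/-- Equation (13) of the paper: if `p*` is an interior maximizer of the link EE
`f(p) = ω·B·log₂(1 + p·g/(Γσ²))/(p/ξ + c)` on `[0, P_max]`, then it satisfies the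
energy-efficient water-filling formula `p* = ω·B·ξ/(f(p*)·ln 2) − Γσ²/g`. -/
theorem linkEE_interior_maximizer_waterfilling
    (ω B g Γ σ2 c ξ Pmax pstar : ℝ)
    (hω : 0 < ω) (hB : 0 < B) (hg : 0 < g) (hΓ : 0 < Γ) (hσ2 : 0 < σ2)
    (hc : 0 < c) (hξ0 : 0 < ξ) (hξ1 : ξ ≤ 1) (hPmax : 0 < Pmax)
    (f : ℝ → ℝ)
    (hf : ∀ p, f p = ω * B * Real.logb 2 (1 + p * g / (Γ * σ2)) / (p / ξ + c))
    (h0 : 0 < pstar) (h1 : pstar < Pmax)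
    (hmax : ∀ p ∈ Set.Icc (0 : ℝ) Pmax, f p ≤ f pstar) :
    pstar = ω * B * ξ / (f pstar * Real.log 2) - Γ * σ2 / g := by
  have hKpos : 0 < Γ * σ2 := mul_pos hΓ hσ2
  have hlog2 : 0 < Real.log 2 := Real.log_pos (by norm_num)
  have hu : (1:ℝ) < 1 + pstar * g / (Γ * σ2) := by
    have : 0 < pstar * g / (Γ * σ2) := div_pos (mul_pos h0 hg) hKpos
    linarith
  have hu0 : (1 + pstar * g / (Γ * σ2)) ≠ 0 := by linarith
  have hD : 0 < pstar / ξ + c := by positivity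
  have hL : 0 < Real.log (1 + pstar * g / (Γ * σ2)) := Real.log_pos hu
  have hfe : f = fun p => ω * B * (Real.log (1 + p * g / (Γ * σ2)) / Real.log 2) / (p / ξ + c) := by
    funext p
    rw [hf p, Real.logb]
  have hU : HasDerivAt (fun p : ℝ => 1 + p * g / (Γ * σ2)) (g / (Γ * σ2)) pstar := by
    have h := ((hasDerivAt_id pstar).mul_const (g / (Γ * σ2))).const_add (1:ℝ)
    simpa [mul_div_assoc] using h
  have hlogU : HasDerivAt (fun p => Real.log (1 + p * g / (Γ * σ2)))
      (g / (Γ * σ2) / (1 + pstar * g / (Γ * σ2))) pstar := hU.log hu0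
  have hN : HasDerivAt (fun p => ω * B * (Real.log (1 + p * g / (Γ * σ2)) / Real.log 2))
      (ω * B * (g / (Γ * σ2) / (1 + pstar * g / (Γ * σ2)) / Real.log 2)) pstar := by
    simpa [mul_div_assoc] using (hlogU.div_const (Real.log 2)).const_mul (ω * B)
  have hDd : HasDerivAt (fun p : ℝ => p / ξ + c) (1 / ξ) pstar := by
    simpa using ((hasDerivAt_id pstar).div_const ξ).add_const c
  have hF : HasDerivAt f
      ((ω * B * (g / (Γ * σ2) / (1 + pstar * g / (Γ * σ2)) / Real.log 2) * (pstar / ξ + c)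
        - ω * B * (Real.log (1 + pstar * g / (Γ * σ2)) / Real.log 2) * (1 / ξ))
        / (pstar / ξ + c) ^ 2) pstar := by
    rw [hfe]; exact hN.div hDd (ne_of_gt hD)
  have hloc : IsLocalMax f pstar := by
    have hmem : Set.Icc (0:ℝ) Pmax ∈ nhds pstar := Icc_mem_nhds h0 h1
    exact Filter.eventually_of_mem hmem hmax
  have hzero := hloc.hasDerivAt_eq_zero hF
  have hnum : ω * B * (g / (Γ * σ2) / (1 + pstar * g / (Γ * σ2)) / Real.log 2) * (pstar / ξ + c)
      - ω * B * (Real.log (1 + pstar * g / (Γ * σ2)) / Real.log 2) * (1 / ξ) = 0 := by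
    have := (div_eq_zero_iff.mp hzero).resolve_right (by positivity)
    exact this
  rw [hf pstar, Real.logb]
  have harg : 1 + pstar * g / (Γ * σ2) = (Γ * σ2 + pstar * g) / (Γ * σ2) := by
    field_simp
  have hLne : Real.log ((Γ * σ2 + pstar * g) / (Γ * σ2)) ≠ 0 := by
    rw [← harg]; exact ne_of_gt hL
  have hlogne := ne_of_gt hlog2
  have hLne' : Real.log ((Γ * σ2 + g * pstar) / (Γ * σ2)) ≠ 0 := by
    rw [mul_comm g pstar]; exact hLne
  have hωB : ω * B ≠ 0 := by positivity
  field_simp at hnum ⊢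
  have hX : g * (pstar + ξ * c) - (Γ * σ2 + g * pstar) * Real.log ((Γ * σ2 + g * pstar) / (Γ * σ2)) = 0 := by
    have h' : ω * B * (g * (pstar + ξ * c) - (Γ * σ2 + g * pstar) * Real.log ((Γ * σ2 + g * pstar) / (Γ * σ2))) = 0 := by
      linear_combination hnum
    exact (mul_eq_zero.mp h').resolve_left hωB
  linear_combination -hX
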